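/- In the field F_2((X^{-1})), the Laurent series L = Σ_{n=1}^∞ X^{-(2^n - 1)} satisfies L² + X·L + 1 = 0. -/

import Mathlib

open scoped Classical

lemma sq_coeff_two (x : HahnSeries ℤ (ZMod 2)) (a : ℤ) :
    (x * x).coeff a = if 2 ∣ a then x.coeff (a / 2) * x.coeff (a / 2) else 0 := by
  classical
  rw [HahnSeries.coeff_mul]
  set s := Finset.antidiagonal x.isPWO_support x.isPWO_support a with hsdef
  rw [← Finset.sum_filter_add_sum_filter_not s (fun ij => ij.1 = ij.2)]
  have hoff : ∑ ij ∈ s.filter (fun ij => ¬ ij.1 = ij.2), x.coeff ij.1 * x.coeff ij.2 = 0 := by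
    refine Finset.sum_involution (fun ij _ => Prod.swap ij) ?_ ?_ ?_ ?_
    · intro ij _
      have h2 : (2 : ZMod 2) = 0 := by decide
      have : x.coeff ij.1 * x.coeff ij.2 + x.coeff (Prod.swap ij).1 * x.coeff (Prod.swap ij).2
          = 2 * (x.coeff ij.1 * x.coeff ij.2) := by
        simp only [Prod.fst_swap, Prod.snd_swap]; ring
      rw [this, h2, zero_mul]
    · intro ij hij _
      have hne : ¬ ij.1 = ij.2 := (Finset.mem_filter.mp hij).2
      intro hcontra
      exact hne (congrArg Prod.snd hcontra)
    · intro ij hij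
      rcases Finset.mem_filter.mp hij with ⟨hmem, hne⟩
      rcases Finset.mem_addAntidiagonal.mp hmem with ⟨h1, h2, h3⟩
      refine Finset.mem_filter.mpr ⟨Finset.mem_addAntidiagonal.mpr ⟨h2, h1, by
        simp only [Prod.fst_swap, Prod.snd_swap]; omega⟩, ?_⟩
      simp only [Prod.fst_swap, Prod.snd_swap]
      exact fun h => hne h.symm
    · intro ij _; exact Prod.swap_swap ij
  rw [hoff, add_zero]
  by_cases hd : 2 ∣ a
  · rw [if_pos hd]
    refine Finset.sum_eq_single (a / 2, a / 2) ?_ ?_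
    · intro b hb hbne
      rcases Finset.mem_filter.mp hb with ⟨hmem, heq⟩
      rcases Finset.mem_addAntidiagonal.mp hmem with ⟨_, _, h3⟩
      exfalso
      apply hbne
      have hb1 : b.1 = a / 2 := by omega
      have hb2 : b.2 = a / 2 := by omega
      exact Prod.ext hb1 hb2
    · intro hnot
      by_cases hz : x.coeff (a / 2) = 0
      · rw [hz, zero_mul]
      · exfalso
        apply hnot
        refine Finset.mem_filter.mpr ⟨Finset.mem_addAntidiagonal.mpr ⟨hz, hz, by omega⟩, rfl⟩
  · rw [if_neg hd]
    apply Finset.sum_eq_zero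
    intro b hb
    rcases Finset.mem_filter.mp hb with ⟨hmem, heq⟩
    rcases Finset.mem_addAntidiagonal.mp hmem with ⟨_, _, h3⟩
    exfalso
    have heq' : b.1 = b.2 := heq
    exact hd ⟨b.1, by omega⟩

theorem goldenRatio_char_two_series (L : LaurentSeries (ZMod 2))
    (hL : ∀ m : ℤ, L.coeff m = if ∃ n : ℕ, 1 ≤ n ∧ m = 2 ^ n - 1 then 1 else 0) :
    L ^ 2 + (HahnSeries.single (-1 : ℤ) (1 : ZMod 2)) * L + 1 = 0 := by
  ext m
  have hB : ((HahnSeries.single (-1 : ℤ) (1 : ZMod 2)) * L).coeff m = L.coeff (m + 1) := by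
    have := HahnSeries.coeff_single_mul_add (r := (1 : ZMod 2)) (x := L) (a := m + 1) (b := -1)
    simpa using this
  have hA := sq_coeff_two L m
  rw [pow_two] at *
  simp only [HahnSeries.coeff_add, HahnSeries.coeff_one, HahnSeries.coeff_zero, hA, hB, hL]
  by_cases h0 : m = 0
  · subst h0
    have hP0 : ¬ ∃ n : ℕ, 1 ≤ n ∧ (0 : ℤ) / 2 = 2 ^ n - 1 := by
      rintro ⟨n, hn, h⟩
      have : (2 : ℤ) ≤ 2 ^ n := by
        calc (2 : ℤ) = 2 ^ 1 := (pow_one 2).symm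
        _ ≤ 2 ^ n := pow_le_pow_right₀ (by norm_num) hn
      omega
    have hP1 : ∃ n : ℕ, 1 ≤ n ∧ (0 : ℤ) + 1 = 2 ^ n - 1 := ⟨1, le_refl 1, by norm_num⟩
    rw [if_neg hP0, if_pos hP1, if_pos rfl]
    decide
  · by_cases hEx : ∃ n : ℕ, 1 ≤ n ∧ m + 1 = 2 ^ n - 1
    · obtain ⟨n, hn1, hn⟩ := hEx
      have hn2 : 2 ≤ n := by
        by_contra h
        have hn1' : n = 1 := by omega
        subst hn1'
        norm_num at hn
        exact h0 (by omega)
      obtain ⟨k, rfl⟩ : ∃ k, n = k + 1 := ⟨n - 1, by omega⟩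
      have hpow : (2 : ℤ) ^ (k + 1) = 2 * 2 ^ k := by ring
      have hm : m = 2 * (2 ^ k - 1) := by omega
      have hd : 2 ∣ m := ⟨2 ^ k - 1, hm⟩
      have hdiv : m / 2 = 2 ^ k - 1 := by omega
      have hPk : ∃ j : ℕ, 1 ≤ j ∧ m / 2 = 2 ^ j - 1 := ⟨k, by omega, by rw [hdiv]⟩
      rw [if_pos hd, if_pos hPk, if_pos ⟨k + 1, hn1, hn⟩, if_neg h0]
      decide
    · have hAz : (if 2 ∣ m then
          (if ∃ n : ℕ, 1 ≤ n ∧ m / 2 = 2 ^ n - 1 then (1 : ZMod 2) else 0) *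
          (if ∃ n : ℕ, 1 ≤ n ∧ m / 2 = 2 ^ n - 1 then (1 : ZMod 2) else 0) else 0) = 0 := by
        by_cases hd : 2 ∣ m
        · rw [if_pos hd]
          have : ¬ ∃ n : ℕ, 1 ≤ n ∧ m / 2 = 2 ^ n - 1 := by
            rintro ⟨k, hk1, hk⟩
            apply hEx
            refine ⟨k + 1, by omega, ?_⟩
            have hpow : (2 : ℤ) ^ (k + 1) = 2 * 2 ^ k := by ring
            omega
          rw [if_neg this, zero_mul]
        · rw [if_neg hd]
      rw [hAz, if_neg hEx, if_neg h0]
      decide
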